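/- If f : [0,T] → ℝᴺ is continuous and 1·f(0) ≤ θ, then: g_f is continuous, nondecreasing, and g_f(0) = 0; 1·Γ(f)(t) ≤ θ for every t ∈ [0,T]; and g_f increases only on the boundary, i.e. for all 0 ≤ s ≤ t ≤ T, if 1·Γ(f)(u) < θ for every u ∈ [s,t], then g_f(t) = g_f(s). In particular, the pair (Γ(f), g_f) solves the Skorohod problem in G = {x ∈ ℝᴺ : 1·x ≤ θ} with reflection direction −e_N for the data f. -/

import Mathlib

open Set

/-- The coordinate sum `1 · x` of a vector in Euclidean space. -/
noncomputable def sumC {N : ℕ} (x : EuclideanSpace ℝ (Fin N)) : ℝ := ∑ i, x i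

/-- The regulator `g_f(t) = sup_{0 ≤ u ≤ t} (θ - 1·f(u))⁻`. -/
noncomputable def reg (N : ℕ) (θ : ℝ) (f : ℝ → EuclideanSpace ℝ (Fin N)) (t : ℝ) : ℝ :=
  sSup ((fun u => max (sumC (f u) - θ) 0) '' Icc 0 t)

/-- The `N`-th standard basis vector `e_N`. -/
noncomputable def eN (N : ℕ) (hN : 1 ≤ N) : EuclideanSpace ℝ (Fin N) :=
  EuclideanSpace.single ⟨N - 1, by omega⟩ 1

/-- The Skorohod-type reflection map `Γ(f)(t) = f(t) - g_f(t) e_N`. -/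
noncomputable def Gam (N : ℕ) (hN : 1 ≤ N) (θ : ℝ) (f : ℝ → EuclideanSpace ℝ (Fin N))
    (t : ℝ) : EuclideanSpace ℝ (Fin N) :=
  f t - reg N θ f t • eN N hN

/-- The sup norm `‖f‖_T = sup_{t ∈ [0,T]} ‖f(t)‖`. -/
noncomputable def supNorm (N : ℕ) (T : ℝ) (f : ℝ → EuclideanSpace ℝ (Fin N)) : ℝ :=
  sSup ((fun t => ‖f t‖) '' Icc 0 T)

/-- For continuous data starting in the half-space, `(Γ(f), g_f)` solves the Skorohod problem in
`G = {x : 1·x ≤ θ}` with reflection direction `-e_N`: the regulator is continuous, nondecreasing,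
starts at `0`, the reflected path stays in `G`, and the regulator increases only at the boundary. -/
theorem gamma_solves_skorohod (N : ℕ) (hN : 1 ≤ N) (θ T : ℝ) (hT : 0 < T)
    (f : ℝ → EuclideanSpace ℝ (Fin N))
    (hf : ContinuousOn f (Icc 0 T)) (hf0 : sumC (f 0) ≤ θ) :
    ContinuousOn (reg N θ f) (Icc 0 T) ∧
    MonotoneOn (reg N θ f) (Icc 0 T) ∧
    reg N θ f 0 = 0 ∧
    (∀ t ∈ Icc (0:ℝ) T, sumC (Gam N hN θ f t) ≤ θ) ∧
    (∀ s t : ℝ, 0 ≤ s → s ≤ t → t ≤ T →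
      (∀ u ∈ Icc s t, sumC (Gam N hN θ f u) < θ) → reg N θ f t = reg N θ f s) := by

  classical
  set φ : ℝ → ℝ := fun u => max (sumC (f u) - θ) 0 with hφdef
  have hsumC : Continuous (sumC : EuclideanSpace ℝ (Fin N) → ℝ) := by
    unfold sumC
    exact continuous_finset_sum _ fun i _ => (EuclideanSpace.proj i).continuous
  have hφ : ContinuousOn φ (Icc 0 T) :=
    fun x hx => (((hsumC.comp_continuousOn hf).sub continuousOn_const) x hx).max continuousWithinAt_const
  have hφnn : ∀ u, 0 ≤ φ u := fun u => le_max_right _ _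
  have hφ0 : φ 0 = 0 := by simp [hφdef, sub_nonpos.mpr hf0]
  have hK : IsCompact (φ '' Icc 0 T) := (isCompact_Icc).image_of_continuousOn hφ
  have hbdd : ∀ {t : ℝ}, t ≤ T → BddAbove (φ '' Icc 0 t) := fun {t} ht =>
    hK.bddAbove.mono (image_mono (Icc_subset_Icc_right ht))
  have hne : ∀ {t : ℝ}, 0 ≤ t → (φ '' Icc 0 t).Nonempty := fun {t} ht =>
    ⟨φ 0, mem_image_of_mem _ ⟨le_refl 0, ht⟩⟩
  have hreg_ge : ∀ {t : ℝ}, 0 ≤ t → t ≤ T → φ t ≤ reg N θ f t := fun {t} h0 hT' =>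
    le_csSup (hbdd hT') (mem_image_of_mem _ ⟨h0, le_refl t⟩)
  have hmono : MonotoneOn (reg N θ f) (Icc 0 T) := by
    intro s hs t ht hst
    exact csSup_le_csSup (hbdd ht.2) (hne hs.1) (image_mono (Icc_subset_Icc_right hst))
  have hreg0 : reg N θ f 0 = 0 := by
    have : reg N θ f 0 = sSup (φ '' Icc (0:ℝ) 0) := rfl
    rw [this, Icc_self, image_singleton, csSup_singleton, hφ0]
  have heN : sumC (eN N hN) = 1 := by
    simp [sumC, eN, EuclideanSpace.single_apply]
  have hGamEq : ∀ t, sumC (Gam N hN θ f t) = sumC (f t) - reg N θ f t := by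
    intro t
    have : sumC (Gam N hN θ f t) = sumC (f t) - reg N θ f t * sumC (eN N hN) := by
      simp [Gam, sumC, PiLp.sub_apply, PiLp.smul_apply, Finset.sum_sub_distrib,
        Finset.mul_sum, smul_eq_mul]
    rw [this, heN, mul_one]
  have hsplit : ∀ s t : ℝ, 0 ≤ s → s ≤ t → t ≤ T →
      reg N θ f t = max (reg N θ f s) (sSup (φ '' Icc s t)) := by
    intro s t hs hst ht
    have hU : Icc (0:ℝ) t = Icc 0 s ∪ Icc s t := (Icc_union_Icc_eq_Icc hs hst).symm
    have : reg N θ f t = sSup (φ '' Icc 0 s ∪ φ '' Icc s t) := by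
      show sSup (φ '' Icc 0 t) = _
      rw [hU, image_union]
    rw [this, csSup_union (hbdd (hst.trans ht)) (hne hs)
      (hK.bddAbove.mono (image_mono (Icc_subset_Icc hs ht)))
      ⟨φ s, mem_image_of_mem _ ⟨le_refl s, hst⟩⟩]
    rfl
  have hcont : ContinuousOn (reg N θ f) (Icc 0 T) := by
    have huc := Metric.uniformContinuousOn_iff.mp
      (isCompact_Icc.uniformContinuousOn_of_continuous hφ)
    rw [Metric.continuousOn_iff]
    intro b hb ε hε
    obtain ⟨δ, hδ, hδ'⟩ := huc (ε/2) (by linarith)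
    refine ⟨δ, hδ, fun a ha hab => ?_⟩
    -- key estimate: for s ≤ t with |t - s| < δ, reg t ≤ reg s + ε/2
    have key : ∀ s t : ℝ, s ∈ Icc (0:ℝ) T → t ∈ Icc (0:ℝ) T → s ≤ t → dist t s < δ →
        reg N θ f t ≤ reg N θ f s + ε/2 := by
      intro s t hs ht hst hd
      rw [hsplit s t hs.1 hst ht.2]
      refine max_le (by linarith) (csSup_le ⟨φ s, mem_image_of_mem _ ⟨le_refl s, hst⟩⟩ ?_)
      rintro x ⟨u, hu, rfl⟩
      have hu' : u ∈ Icc (0:ℝ) T := ⟨hs.1.trans hu.1, hu.2.trans ht.2⟩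
      have : dist (φ u) (φ s) < ε/2 := by
        apply hδ' u hu' s hs
        rw [Real.dist_eq] at hd ⊢
        rw [abs_of_nonneg (sub_nonneg.mpr hu.1)]
        rw [abs_of_nonneg (sub_nonneg.mpr hst)] at hd
        linarith [hu.2]
      have := (abs_lt.mp (by rwa [Real.dist_eq] at this)).2
      have hφs := hreg_ge hs.1 hs.2
      linarith
    rcases le_total a b with hab' | hab'
    · have h1 := key a b ha hb hab' (by rwa [dist_comm])
      have h2 := hmono ha hb hab'
      rw [Real.dist_eq, abs_of_nonpos (by linarith)]
      linarith
    · have h1 := key b a hb ha hab' hab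
      have h2 := hmono hb ha hab'
      rw [Real.dist_eq, abs_of_nonneg (by linarith)]
      linarith
  refine ⟨hcont, hmono, hreg0, ?_, ?_⟩
  · intro t ht
    rw [hGamEq]
    have := hreg_ge ht.1 ht.2
    have : sumC (f t) - θ ≤ reg N θ f t := le_trans (le_max_left _ _) this
    linarith
  · intro s t hs hst ht hlt
    have hle : reg N θ f s ≤ reg N θ f t := hmono ⟨hs, hst.trans ht⟩ ⟨hs.trans hst, ht⟩ hst
    by_contra hne'
    have hgt : reg N θ f s < reg N θ f t := lt_of_le_of_ne hle (Ne.symm hne')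
    have hsp := hsplit s t hs hst ht
    have hS : sSup (φ '' Icc s t) = reg N θ f t := by
      rcases max_cases (reg N θ f s) (sSup (φ '' Icc s t)) with ⟨h1, h2⟩ | ⟨h1, h2⟩
      · exact absurd (hsp.trans h1) (ne_of_gt hgt)
      · exact (hsp.trans h1).symm
    obtain ⟨u, hu, huS⟩ := isCompact_Icc.exists_sSup_image_eq ⟨s, le_refl s, hst⟩
      (hφ.mono (Icc_subset_Icc hs ht))
    have hu' : u ∈ Icc (0:ℝ) T := ⟨hs.trans hu.1, hu.2.trans ht⟩
    have hφu : φ u = reg N θ f t := by rw [← huS, hS]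
    have hregs_nn : 0 ≤ reg N θ f s := (hφnn s).trans (hreg_ge hs (hst.trans ht))
    have hupos : 0 < φ u := by rw [hφu]; linarith
    have hφu' : φ u = sumC (f u) - θ := by
      rcases max_cases (sumC (f u) - θ) (0:ℝ) with ⟨h1, _⟩ | ⟨h1, h2⟩
      · exact h1
      · rw [hφdef] at hupos; simp only at hupos; rw [h1] at hupos; exact absurd hupos (lt_irrefl 0)
    have h1 : reg N θ f u ≤ reg N θ f t := hmono hu' ⟨hs.trans hst, ht⟩ hu.2
    have h2 : sumC (Gam N hN θ f u) < θ := hlt u hu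
    rw [hGamEq] at h2
    -- reg u ≤ reg t = φ u = sumC f u - θ, but sumC f u - θ < reg u
    have h3 : sumC (f u) - θ < reg N θ f u := by linarith
    rw [← hφu', hφu] at h3
    linarith
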